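/- (Complex/unitary case, noiseless.) Suppose G is connected and 2p ≥ 3r. Then every second-order critical point Y of the complex rank-p problem min{Re tr(L̂ (Y Y*)*) : Y feasible} with noiseless cost matrix L̂ = L_Z satisfies Y Y* = Z Z*. -/

import Mathlib

open Matrix MeasureTheory ProbabilityTheory
open scoped Kronecker BigOperators ComplexOrder

namespace SyncPaper

variable {α : Type*}

/-- The `i`-th `r × p` row-block of a block matrix `Y ∈ α^{rn × p}`. -/
def blk {n r p : ℕ} (Y : Matrix (Fin n × Fin r) (Fin p) α) (i : Fin n) :
    Matrix (Fin r) (Fin p) α :=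
  Matrix.of fun a b => Y (i, a) b

/-- `Y` is feasible for the complex problem: every `r × p` row-block satisfies `Y_i Y_i* = I_r`. -/
def FeasibleC {n r p : ℕ} (Y : Matrix (Fin n × Fin r) (Fin p) ℂ) : Prop :=
  ∀ i, blk Y i * (blk Y i)ᴴ = 1

/-- Hermitian block-diagonal projection: keeps the Hermitian part of each `r × r`
diagonal block and zeroes out all off-diagonal blocks. -/
noncomputable def SBDC {n r : ℕ} (M : Matrix (Fin n × Fin r) (Fin n × Fin r) ℂ) :
    Matrix (Fin n × Fin r) (Fin n × Fin r) ℂ :=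
  Matrix.of fun q q' => if q.1 = q'.1 then (M q q' + star (M q' q)) / 2 else 0

/-- The matrix `S(Y) = L̂ − SBD(L̂ Y Y*)`. -/
noncomputable def SmatC {n r p : ℕ} (Lhat : Matrix (Fin n × Fin r) (Fin n × Fin r) ℂ)
    (Y : Matrix (Fin n × Fin r) (Fin p) ℂ) :
    Matrix (Fin n × Fin r) (Fin n × Fin r) ℂ :=
  Lhat - SBDC (Lhat * Y * Yᴴ)

/-- Second-order critical point of the complex rank-`p` problem
`min Re tr(L̂ (Y Y*)*)` over feasible `Y`. -/
def IsSecondOrderCriticalC {n r p : ℕ} (Lhat : Matrix (Fin n × Fin r) (Fin n × Fin r) ℂ)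
    (Y : Matrix (Fin n × Fin r) (Fin p) ℂ) : Prop :=
  FeasibleC Y ∧ SmatC Lhat Y * Y = 0 ∧
    ∀ Ydot : Matrix (Fin n × Fin r) (Fin p) ℂ,
      (∀ i, blk Ydot i * (blk Y i)ᴴ + blk Y i * (blk Ydot i)ᴴ = 0) →
      0 ≤ ((SmatC Lhat Y * Ydot * Ydotᴴ).trace).re

/-- The stacked ground truth `Z ∈ ℂ^{rn × r}`. -/
def ZstackC {n r : ℕ} (Zb : Fin n → Matrix (Fin r) (Fin r) ℂ) :
    Matrix (Fin n × Fin r) (Fin r) ℂ :=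
  Matrix.of fun q b => Zb q.1 q.2 b

/-- The block-diagonal matrix `D` with diagonal blocks `Z_1, …, Z_n`. -/
def DmatC {n r : ℕ} (Zb : Fin n → Matrix (Fin r) (Fin r) ℂ) :
    Matrix (Fin n × Fin r) (Fin n × Fin r) ℂ :=
  Matrix.of fun q q' => if q.1 = q'.1 then Zb q.1 q.2 q'.2 else 0

/-- `L_Z = D (L ⊗ I_r) D*`. -/
noncomputable def LZmatC {n r : ℕ} (L : Matrix (Fin n) (Fin n) ℂ) (Zb : Fin n → Matrix (Fin r) (Fin r) ℂ) :
    Matrix (Fin n × Fin r) (Fin n × Fin r) ℂ :=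
  DmatC Zb * (L ⊗ₖ (1 : Matrix (Fin r) (Fin r) ℂ)) * (DmatC Zb)ᴴ

/-- Squared Frobenius norm of a complex matrix. -/
def frobSqC {m m' : Type*} [Fintype m] [Fintype m'] (M : Matrix m m' ℂ) : ℝ :=
  ∑ i, ∑ j, Complex.normSq (M i j)

end SyncPaper
namespace SyncPaper

variable {n r p : ℕ}

/-- assemble an `rn × rn` matrix from `r × r` blocks -/
def ofBlocks (F : Fin n → Fin n → Matrix (Fin r) (Fin r) ℂ) :
    Matrix (Fin n × Fin r) (Fin n × Fin r) ℂ :=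
  Matrix.of fun q q' => F q.1 q'.1 q.2 q'.2

/-- assemble an `rn × p` matrix from `r × p` blocks -/
def ofCols (V : Fin n → Matrix (Fin r) (Fin p) ℂ) :
    Matrix (Fin n × Fin r) (Fin p) ℂ :=
  Matrix.of fun q β => V q.1 q.2 β

lemma ofBlocks_mul_ofBlocks (F G : Fin n → Fin n → Matrix (Fin r) (Fin r) ℂ) :
    ofBlocks F * ofBlocks G = ofBlocks fun i j => ∑ k, F i k * G k j := by
  ext ⟨i, a⟩ ⟨j, b⟩
  simp [ofBlocks, Matrix.mul_apply, Fintype.sum_prod_type, Finset.sum_apply,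
    Matrix.sum_apply]

lemma ofBlocks_mul_ofCols (F : Fin n → Fin n → Matrix (Fin r) (Fin r) ℂ)
    (V : Fin n → Matrix (Fin r) (Fin p) ℂ) :
    ofBlocks F * ofCols V = ofCols fun i => ∑ j, F i j * V j := by
  ext ⟨i, a⟩ β
  simp [ofBlocks, ofCols, Matrix.mul_apply, Fintype.sum_prod_type, Finset.sum_apply,
    Matrix.sum_apply]

lemma ofCols_mul_conjTranspose (V U : Fin n → Matrix (Fin r) (Fin p) ℂ) :
    ofCols V * (ofCols U)ᴴ = ofBlocks fun i j => V i * (U j)ᴴ := by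
  ext ⟨i, a⟩ ⟨j, b⟩
  simp [ofBlocks, ofCols, Matrix.mul_apply, Matrix.conjTranspose_apply]

lemma trace_ofBlocks (F : Fin n → Fin n → Matrix (Fin r) (Fin r) ℂ) :
    (ofBlocks F).trace = ∑ i, (F i i).trace := by
  simp [ofBlocks, Matrix.trace, Matrix.diag, Fintype.sum_prod_type]

lemma ofBlocks_sub (F G : Fin n → Fin n → Matrix (Fin r) (Fin r) ℂ) :
    ofBlocks F - ofBlocks G = ofBlocks fun i j => F i j - G i j := by
  ext ⟨i, a⟩ ⟨j, b⟩; simp [ofBlocks]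

lemma SBDC_ofBlocks (F : Fin n → Fin n → Matrix (Fin r) (Fin r) ℂ) :
    SBDC (ofBlocks F) =
      ofBlocks fun i j => if i = j then (2⁻¹ : ℂ) • (F i i + (F i i)ᴴ) else 0 := by
  ext ⟨i, a⟩ ⟨j, b⟩
  by_cases h : i = j
  · subst h
    simp [SBDC, ofBlocks, Matrix.conjTranspose_apply, div_eq_inv_mul, mul_add,
      Matrix.add_apply, Matrix.smul_apply, smul_eq_mul]
  · simp [SBDC, ofBlocks, h]

lemma ofCols_eq_blocks (Y : Matrix (Fin n × Fin r) (Fin p) ℂ) :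
    Y = ofCols fun i => blk Y i := by
  ext ⟨i, a⟩ β; rfl

end SyncPaper
namespace SyncPaper

variable {r p : ℕ}

/-- matrix unit -/
def unitM (a : Fin r) (α : Fin p) : Matrix (Fin r) (Fin p) ℂ :=
  Matrix.of fun x y => if a = x ∧ α = y then (1 : ℂ) else 0

lemma U1 (N : Matrix (Fin p) (Fin p) ℂ) :
    ∑ a : Fin r, ∑ α : Fin p, unitM a α * (N * (unitM a α)ᴴ)
      = N.trace • (1 : Matrix (Fin r) (Fin r) ℂ) := by
  ext x y
  simp only [Matrix.sum_apply, Matrix.mul_apply, unitM, Matrix.conjTranspose_apply,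
    Matrix.of_apply, Matrix.smul_apply, Matrix.one_apply, Matrix.trace, Matrix.diag,
    smul_eq_mul]
  simp [ite_and, apply_ite (starRingEnd ℂ), Finset.mul_sum, Finset.sum_ite_eq,
    Finset.sum_ite_eq', mul_comm]

lemma U2 (C : Matrix (Fin r) (Fin r) ℂ) :
    ∑ a : Fin r, ∑ α : Fin p, (unitM a α)ᴴ * (C * unitM a α)
      = C.trace • (1 : Matrix (Fin p) (Fin p) ℂ) := by
  ext x y
  simp only [Matrix.sum_apply, Matrix.mul_apply, unitM, Matrix.conjTranspose_apply,
    Matrix.of_apply, Matrix.smul_apply, Matrix.one_apply, Matrix.trace, Matrix.diag,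
    smul_eq_mul]
  simp [ite_and, apply_ite (starRingEnd ℂ), Finset.mul_sum, Finset.sum_ite_eq,
    Finset.sum_ite_eq', mul_comm]

end SyncPaper
namespace SyncPaper

variable {r p : ℕ}

lemma G1 (C : Matrix (Fin r) (Fin r) ℂ) (N : Matrix (Fin p) (Fin p) ℂ) :
    ∑ a : Fin r, ∑ α : Fin p, (C * (unitM a α * (N * (unitM a α)ᴴ))).trace
      = N.trace * C.trace := by
  have h : ∑ a : Fin r, ∑ α : Fin p, (C * (unitM a α * (N * (unitM a α)ᴴ))).trace
      = (C * ∑ a : Fin r, ∑ α : Fin p, unitM a α * (N * (unitM a α)ᴴ)).trace := by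
    simp [Finset.mul_sum, Matrix.trace_sum]
  rw [h, U1]
  simp [mul_comm]

lemma G2 (C : Matrix (Fin r) (Fin r) ℂ) (N : Matrix (Fin p) (Fin p) ℂ) :
    ∑ a : Fin r, ∑ α : Fin p, ((unitM a α)ᴴ * (C * (unitM a α * N))).trace
      = C.trace * N.trace := by
  have h : ∑ a : Fin r, ∑ α : Fin p, ((unitM a α)ᴴ * (C * (unitM a α * N))).trace
      = ((∑ a : Fin r, ∑ α : Fin p, (unitM a α)ᴴ * (C * unitM a α)) * N).trace := by
    simp [Finset.sum_mul, Finset.mul_sum, Matrix.trace_sum, Matrix.mul_assoc]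
  rw [h, U2]
  simp [mul_comm]

end SyncPaper
namespace SyncPaper

variable {r p : ℕ}

/-- tangent direction at a coisometry `A` generated by ambient `Q`. -/
noncomputable def phiD (A Q : Matrix (Fin r) (Fin p) ℂ) : Matrix (Fin r) (Fin p) ℂ :=
  (2 : ℂ) • Q - (Q * Aᴴ + A * Qᴴ) * A

noncomputable def tauC (A B Q : Matrix (Fin r) (Fin p) ℂ) : ℂ :=
  ((B * Aᴴ) * (phiD A Q * (phiD A Q)ᴴ)).trace - (phiD B Q * (phiD A Q)ᴴ).trace

lemma phiD_tangent (A Q : Matrix (Fin r) (Fin p) ℂ) (hA : A * Aᴴ = 1) :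
    phiD A Q * Aᴴ + A * (phiD A Q)ᴴ = 0 := by
  have hA2 : ∀ X : Matrix (Fin r) (Fin r) ℂ, A * (Aᴴ * X) = X := fun X => by
    rw [← Matrix.mul_assoc, hA, Matrix.one_mul]
  simp only [phiD, Matrix.sub_mul, Matrix.mul_sub, Matrix.add_mul, Matrix.mul_add,
    Matrix.conjTranspose_sub, Matrix.conjTranspose_add, Matrix.conjTranspose_smul,
    Matrix.conjTranspose_mul, Matrix.conjTranspose_conjTranspose,
    Matrix.smul_mul, Matrix.mul_smul, Matrix.mul_assoc, hA, hA2,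
    Matrix.mul_one, Matrix.one_mul, Complex.star_def, Complex.conj_ofNat]
  module

set_option maxHeartbeats 1000000 in
lemma tau_pair (A B Q : Matrix (Fin r) (Fin p) ℂ) (hA : A * Aᴴ = 1) :
    tauC A B Q + tauC A B (Complex.I • Q) =
      8 * ((B * Aᴴ) * (Q * Qᴴ)).trace
      - 6 * ((B * Aᴴ) * (Q * (Aᴴ * (A * Qᴴ)))).trace
      + 2 * ((B * Aᴴ) * (A * (Qᴴ * (Q * Aᴴ)))).trace
      - 8 * (Q * Qᴴ).trace
      + 4 * (Q * (Aᴴ * (A * Qᴴ))).trace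
      + 4 * (Q * (Bᴴ * (B * Qᴴ))).trace
      - 2 * (Q * (Bᴴ * (B * (Aᴴ * (A * Qᴴ))))).trace
      - 2 * (B * (Qᴴ * (B * (Aᴴ * (Q * Aᴴ))))).trace := by
  have hA2 : ∀ X : Matrix (Fin r) (Fin r) ℂ, A * (Aᴴ * X) = X := fun X => by
    rw [← Matrix.mul_assoc, hA, Matrix.one_mul]
  simp only [tauC, phiD, Matrix.sub_mul, Matrix.mul_sub, Matrix.add_mul, Matrix.mul_add,
    Matrix.conjTranspose_sub, Matrix.conjTranspose_add, Matrix.conjTranspose_smul,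
    Matrix.conjTranspose_neg, Matrix.conjTranspose_mul, Matrix.conjTranspose_conjTranspose,
    Matrix.smul_mul, Matrix.mul_smul, Matrix.neg_mul, Matrix.mul_neg,
    Matrix.mul_assoc, hA, hA2, Matrix.mul_one, Matrix.one_mul,
    _root_.map_mul, Complex.conj_ofNat, Complex.conj_I, Matrix.trace_sub,
    Matrix.trace_add, Matrix.trace_smul, Matrix.trace_neg, smul_smul, smul_eq_mul,
    neg_smul, smul_neg, neg_neg, smul_sub, smul_add]
  simp only [star_mul', star_star, star_ofNat, Complex.star_def, Complex.conj_I,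
    Complex.conj_ofNat]
  simp only [map_neg, Complex.conj_I, neg_neg]
  ring_nf
  simp only [Complex.I_sq]
  ring

end SyncPaper
namespace SyncPaper

variable {r p : ℕ}

lemma U3 (C : Matrix (Fin r) (Fin r) ℂ) (F : Matrix (Fin p) (Fin r) ℂ) :
    ∑ a : Fin r, ∑ α : Fin p, (unitM a α)ᴴ * (C * (unitM a α * F))
      = C.trace • F := by
  ext x y
  simp only [Matrix.sum_apply, Matrix.mul_apply, unitM, Matrix.conjTranspose_apply,
    Matrix.of_apply, Matrix.smul_apply, Matrix.trace, Matrix.diag, smul_eq_mul]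
  simp [ite_and, apply_ite (starRingEnd ℂ), Finset.mul_sum, Finset.sum_ite_eq,
    Finset.sum_ite_eq', mul_comm, Finset.sum_mul, Finset.mul_sum]

lemma U4 (F : Matrix (Fin p) (Fin r) ℂ) :
    ∑ a : Fin r, ∑ α : Fin p, (unitM a α)ᴴ * (unitM a α * F)
      = (r : ℂ) • F := by
  ext x y
  simp only [Matrix.sum_apply, Matrix.mul_apply, unitM, Matrix.conjTranspose_apply,
    Matrix.of_apply, Matrix.smul_apply, smul_eq_mul]
  simp [ite_and, apply_ite (starRingEnd ℂ), Finset.mul_sum, Finset.sum_ite_eq,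
    Finset.sum_ite_eq', mul_comm]

lemma G1a (C : Matrix (Fin r) (Fin r) ℂ) :
    ∑ a : Fin r, ∑ α : Fin p, (C * (unitM a α * (unitM a α)ᴴ)).trace
      = (p : ℂ) * C.trace := by
  have h := G1 C (1 : Matrix (Fin p) (Fin p) ℂ)
  simpa using h

lemma G6 (C : Matrix (Fin r) (Fin r) ℂ) (F₁ : Matrix (Fin p) (Fin r) ℂ)
    (F₂ : Matrix (Fin r) (Fin p) ℂ) :
    ∑ a : Fin r, ∑ α : Fin p, (C * (unitM a α * (F₁ * (F₂ * (unitM a α)ᴴ)))).trace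
      = (F₁ * F₂).trace * C.trace := by
  have h := G1 C (F₁ * F₂)
  simpa [Matrix.mul_assoc] using h

lemma G4 (C : Matrix (Fin r) (Fin r) ℂ) (D : Matrix (Fin r) (Fin p) ℂ)
    (F : Matrix (Fin p) (Fin r) ℂ) :
    ∑ a : Fin r, ∑ α : Fin p, (C * (D * ((unitM a α)ᴴ * (unitM a α * F)))).trace
      = (r : ℂ) * (C * (D * F)).trace := by
  have h : ∑ a : Fin r, ∑ α : Fin p, (C * (D * ((unitM a α)ᴴ * (unitM a α * F)))).trace
      = (C * (D * ((r : ℂ) • F))).trace := by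
    rw [← U4 (p := p) F]
    simp [Matrix.mul_sum, Matrix.trace_sum]
  rw [h]
  simp [Matrix.mul_smul, Matrix.trace_smul]

lemma G7 : ∑ a : Fin r, ∑ α : Fin p, (unitM a α * (unitM a α)ᴴ).trace
      = (p : ℂ) * (r : ℂ) := by
  have h := G1 (1 : Matrix (Fin r) (Fin r) ℂ) (1 : Matrix (Fin p) (Fin p) ℂ)
  simpa using h

lemma G8 (F₁ : Matrix (Fin p) (Fin r) ℂ) (F₂ : Matrix (Fin r) (Fin p) ℂ) :
    ∑ a : Fin r, ∑ α : Fin p, (unitM a α * (F₁ * (F₂ * (unitM a α)ᴴ))).trace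
      = (F₁ * F₂).trace * (r : ℂ) := by
  have h := G1 (1 : Matrix (Fin r) (Fin r) ℂ) (F₁ * F₂)
  simpa [Matrix.mul_assoc] using h

lemma G9 (F₁ F₃ : Matrix (Fin p) (Fin r) ℂ) (F₂ F₄ : Matrix (Fin r) (Fin p) ℂ) :
    ∑ a : Fin r, ∑ α : Fin p,
        (unitM a α * (F₁ * (F₂ * (F₃ * (F₄ * (unitM a α)ᴴ))))).trace
      = (F₁ * (F₂ * (F₃ * F₄))).trace * (r : ℂ) := by
  have h := G1 (1 : Matrix (Fin r) (Fin r) ℂ) (F₁ * (F₂ * (F₃ * F₄)))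
  simpa [Matrix.mul_assoc] using h

lemma G5 (D₁ D₂ : Matrix (Fin r) (Fin p) ℂ) (F₁ F₂ : Matrix (Fin p) (Fin r) ℂ) :
    ∑ a : Fin r, ∑ α : Fin p,
        (D₁ * ((unitM a α)ᴴ * (D₂ * (F₁ * (unitM a α * F₂))))).trace
      = (D₂ * F₁).trace * (D₁ * F₂).trace := by
  have h : ∑ a : Fin r, ∑ α : Fin p,
        (D₁ * ((unitM a α)ᴴ * (D₂ * (F₁ * (unitM a α * F₂))))).trace
      = (D₁ * ((D₂ * F₁).trace • F₂)).trace := by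
    rw [← U3 (D₂ * F₁) F₂]
    simp [Matrix.mul_sum, Matrix.trace_sum, Matrix.mul_assoc]
  rw [h]
  simp [Matrix.mul_smul, Matrix.trace_smul, mul_comm]

end SyncPaper
namespace SyncPaper

variable {r p : ℕ}

set_option maxHeartbeats 1000000 in
lemma tau_sum (A B : Matrix (Fin r) (Fin p) ℂ) (hA : A * Aᴴ = 1) (hB : B * Bᴴ = 1) :
    ∑ a : Fin r, ∑ α : Fin p,
        (tauC A B (unitM a α) + tauC A B (Complex.I • unitM a α))
      = (8 * (p : ℂ) - 4 * (r : ℂ)) * (B * Aᴴ).trace - 8 * (p : ℂ) * (r : ℂ)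
        + 8 * (r : ℂ) ^ 2 - 2 * (r : ℂ) * ((B * Aᴴ) * (A * Bᴴ)).trace
        - 2 * ((B * Aᴴ).trace) ^ 2 := by
  have htrA : (Aᴴ * A).trace = (r : ℂ) := by
    rw [Matrix.trace_mul_comm, hA]; simp
  have htrB : (Bᴴ * B).trace = (r : ℂ) := by
    rw [Matrix.trace_mul_comm, hB]; simp
  rw [Finset.sum_congr rfl fun a _ => Finset.sum_congr rfl fun α _ =>
    tau_pair A B (unitM a α) hA]
  simp only [Finset.sum_add_distrib, Finset.sum_sub_distrib, ← Finset.mul_sum]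
  rw [G1a, G6, G4, G7, G8, G8, G9, G5]
  rw [htrA, htrB]
  have h1 : ((B * Aᴴ) * (A * Aᴴ)).trace = (B * Aᴴ).trace := by rw [hA, Matrix.mul_one]
  have h2 : (Bᴴ * (B * (Aᴴ * A))).trace = ((B * Aᴴ) * (A * Bᴴ)).trace := by
    rw [Matrix.trace_mul_comm]
    simp only [Matrix.mul_assoc]
  rw [h1, h2]
  ring
end SyncPaper
namespace SyncPaper

variable {r p : ℕ}

lemma trace_mul_conjTranspose_self {k l : ℕ} (N : Matrix (Fin k) (Fin l) ℂ) :
    (N * Nᴴ).trace = ((frobSqC N : ℝ) : ℂ) := by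
  simp [Matrix.trace, Matrix.diag, Matrix.mul_apply, Matrix.conjTranspose_apply,
    frobSqC, Complex.mul_conj]

lemma frobSqC_nonneg {k l : ℕ} (N : Matrix (Fin k) (Fin l) ℂ) : 0 ≤ frobSqC N := by
  apply Finset.sum_nonneg; intro i _
  apply Finset.sum_nonneg; intro j _
  exact Complex.normSq_nonneg _

lemma frobSqC_eq_zero {k l : ℕ} (N : Matrix (Fin k) (Fin l) ℂ) (h : frobSqC N = 0) :
    N = 0 := by
  ext i j
  have h1 : ∀ i ∈ Finset.univ, (0:ℝ) ≤ ∑ j, Complex.normSq (N i j) := fun i _ =>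
    Finset.sum_nonneg fun j _ => Complex.normSq_nonneg _
  have h2 := (Finset.sum_eq_zero_iff_of_nonneg h1).mp h i (Finset.mem_univ i)
  have h3 : ∀ j ∈ Finset.univ, (0:ℝ) ≤ Complex.normSq (N i j) := fun j _ =>
    Complex.normSq_nonneg _
  have h4 := (Finset.sum_eq_zero_iff_of_nonneg h3).mp h2 j (Finset.mem_univ j)
  simpa [Complex.normSq_eq_zero] using h4

/-- Cauchy–Schwarz for the diagonal: `|tr M|² ≤ r ‖M‖²`. -/
lemma normSq_trace_le (M : Matrix (Fin r) (Fin r) ℂ) :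
    Complex.normSq M.trace ≤ (r : ℝ) * frobSqC M := by
  have h1 : ‖M.trace‖ ≤ ∑ a, ‖M a a‖ := by
    simpa [Matrix.trace, Matrix.diag] using
      (norm_sum_le Finset.univ (fun a : Fin r => M a a))
  have h2 : (∑ a, ‖M a a‖) ^ 2 ≤
      (r : ℝ) * ∑ a, ‖M a a‖ ^ 2 := by
    have := Finset.sum_mul_sq_le_sq_mul_sq Finset.univ
      (fun _ : Fin r => (1:ℝ)) (fun a => ‖M a a‖)
    simpa using this
  have h3 : ∑ a, ‖M a a‖ ^ 2 ≤ frobSqC M := by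
    unfold frobSqC
    apply Finset.sum_le_sum
    intro a _
    rw [Complex.sq_norm]
    exact Finset.single_le_sum (fun b _ => Complex.normSq_nonneg (M a b))
      (Finset.mem_univ a)
  have h4 : Complex.normSq M.trace = ‖M.trace‖ ^ 2 := (Complex.sq_norm _).symm
  have h5 : ‖M.trace‖ ^ 2 ≤ (∑ a, ‖M a a‖) ^ 2 := by
    apply pow_le_pow_left₀ (norm_nonneg _) h1
  nlinarith [frobSqC_nonneg M, h2, h3, h5]

end SyncPaper
namespace SyncPaper

variable {r p : ℕ}

lemma proj_expand (A B : Matrix (Fin r) (Fin p) ℂ) (hA : A * Aᴴ = 1) :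
    (B * (1 - Aᴴ * A)) * (B * (1 - Aᴴ * A))ᴴ = B * Bᴴ - (B * Aᴴ) * (A * Bᴴ) := by
  have hA2 : ∀ X : Matrix (Fin r) (Fin r) ℂ, A * (Aᴴ * X) = X := fun X => by
    rw [← Matrix.mul_assoc, hA, Matrix.one_mul]
  simp only [Matrix.conjTranspose_mul, Matrix.conjTranspose_sub,
    Matrix.conjTranspose_one, Matrix.conjTranspose_conjTranspose,
    Matrix.mul_sub, Matrix.sub_mul, Matrix.mul_one, Matrix.one_mul,
    Matrix.mul_assoc, hA2]
  abel

lemma t_as_frob (A B : Matrix (Fin r) (Fin p) ℂ) :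
    ((B * Aᴴ) * (A * Bᴴ)).trace = ((frobSqC (B * Aᴴ) : ℝ) : ℂ) := by
  have h := trace_mul_conjTranspose_self (B * Aᴴ)
  simpa [Matrix.conjTranspose_mul, Matrix.conjTranspose_conjTranspose] using h

lemma frob_le_r (A B : Matrix (Fin r) (Fin p) ℂ) (hA : A * Aᴴ = 1) (hB : B * Bᴴ = 1) :
    frobSqC (B * Aᴴ) ≤ (r : ℝ) := by
  have h1 := proj_expand A B hA
  have h2 : ((B * (1 - Aᴴ * A)) * (B * (1 - Aᴴ * A))ᴴ).trace
      = (B * Bᴴ).trace - ((B * Aᴴ) * (A * Bᴴ)).trace := by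
    rw [h1, Matrix.trace_sub]
  rw [trace_mul_conjTranspose_self, hB, t_as_frob, Matrix.trace_one] at h2
  have h3 : (frobSqC (B * (1 - Aᴴ * A)) : ℝ) = (r : ℝ) - frobSqC (B * Aᴴ) := by
    have := congrArg Complex.re h2
    simpa [Complex.ofReal_re, Complex.sub_re, Complex.natCast_re] using this
  have h4 := frobSqC_nonneg (B * (1 - Aᴴ * A))
  linarith

lemma pair_main (hr : 1 ≤ r) (hp : 3 * r ≤ 2 * p) (A B : Matrix (Fin r) (Fin p) ℂ)
    (hA : A * Aᴴ = 1) (hB : B * Bᴴ = 1) :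
    (∑ a : Fin r, ∑ α : Fin p,
        (tauC A B (unitM a α) + tauC A B (Complex.I • unitM a α))).re ≤ 0 ∧
    ((∑ a : Fin r, ∑ α : Fin p,
        (tauC A B (unitM a α) + tauC A B (Complex.I • unitM a α))).re = 0 → A = B) := by
  rw [tau_sum A B hA hB, t_as_frob A B]
  set c := (B * Aᴴ).trace with hc
  set t := frobSqC (B * Aᴴ) with htdef
  set s := c.re
  set u := c.im
  have hre : ((8 * (p:ℂ) - 4 * (r:ℂ)) * c - 8 * (p:ℂ) * (r:ℂ) + 8 * (r:ℂ) ^ 2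
      - 2 * (r:ℂ) * ((t:ℝ):ℂ) - 2 * c ^ 2).re
      = (8 * (p:ℝ) - 4 * (r:ℝ)) * s - 8 * (p:ℝ) * (r:ℝ) + 8 * (r:ℝ) ^ 2
        - 2 * (r:ℝ) * t - 2 * (s ^ 2 - u ^ 2) := by
    simp [Complex.mul_re, Complex.sub_re, Complex.add_re, Complex.ofReal_re,
      Complex.ofReal_im, Complex.natCast_re, Complex.natCast_im, Complex.mul_im,
      Complex.sub_im, Complex.add_im, pow_two]
    rfl
  rw [hre]
  have hcs : s ^ 2 + u ^ 2 ≤ (r : ℝ) * t := by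
    have := normSq_trace_le (B * Aᴴ)
    simpa [Complex.normSq_apply, pow_two] using this
  have htr : t ≤ (r : ℝ) := frob_le_r A B hA hB
  have hrR : (1 : ℝ) ≤ (r : ℝ) := by exact_mod_cast hr
  have hpR : 3 * (r : ℝ) ≤ 2 * (p : ℝ) := by exact_mod_cast hp
  have hs2 : s ^ 2 ≤ (r : ℝ) ^ 2 := by nlinarith [sq_nonneg u]
  have hs : s ≤ (r : ℝ) := by nlinarith
  have h2pr : (r : ℝ) ≤ 2 * (p : ℝ) - 2 * (r : ℝ) := by linarith
  have key : 0 ≤ ((r : ℝ) - s) * ((2 * (p:ℝ) - 2 * (r:ℝ)) - s) :=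
    mul_nonneg (by linarith) (by linarith)
  constructor
  · nlinarith [key, hcs]
  · intro h0
    have h4 : ((r : ℝ) - s) * ((2 * (p:ℝ) - 2 * (r:ℝ)) - s) = 0 := by
      nlinarith [key, hcs]
    have hsr : s = (r : ℝ) := by
      rcases mul_eq_zero.mp h4 with h | h
      · linarith
      · linarith
    -- now conclude A = B
    have hABtr : ((A - B) * (A - B)ᴴ).trace = ((2 * r : ℝ) : ℂ) - (starRingEnd ℂ) c - c := by
      have expand : (A - B) * (A - B)ᴴ = A * Aᴴ - A * Bᴴ - B * Aᴴ + B * Bᴴ := by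
        simp only [Matrix.conjTranspose_sub, Matrix.mul_sub, Matrix.sub_mul]
        abel
      have hABc : (A * Bᴴ).trace = (starRingEnd ℂ) c := by
        have : A * Bᴴ = (B * Aᴴ)ᴴ := by
          simp [Matrix.conjTranspose_mul]
        rw [this, Matrix.trace_conjTranspose, hc]
        rfl
      rw [expand]
      simp only [Matrix.trace_add, Matrix.trace_sub, hA, hB, Matrix.trace_one, hABc,
        Fintype.card_fin]
      push_cast
      ring
    have hfrob : frobSqC (A - B) = 0 := by
      have := congrArg Complex.re hABtr
      rw [trace_mul_conjTranspose_self] at this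
      simp only [Complex.ofReal_re, Complex.sub_re, Complex.ofReal_im] at this
      rw [this]
      have hcre : c.re = (r : ℝ) := hsr
      simp [Complex.conj_re, hcre]
      ring
    have := frobSqC_eq_zero _ hfrob
    exact sub_eq_zero.mp this

end SyncPaper
namespace SyncPaper

variable {n r p : ℕ}

lemma blk_ofCols (V : Fin n → Matrix (Fin r) (Fin p) ℂ) (i : Fin n) :
    blk (ofCols V) i = V i := rfl

lemma sandwich_trace (Z C : Matrix (Fin r) (Fin r) ℂ) (hZ : Zᴴ * Z = 1) :
    (Z * (C * Zᴴ)).trace = C.trace := by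
  rw [Matrix.trace_mul_comm, Matrix.mul_assoc, hZ, Matrix.mul_one]

lemma LZmatC_blocks (Zb : Fin n → Matrix (Fin r) (Fin r) ℂ)
    (L : Matrix (Fin n) (Fin n) ℂ) :
    LZmatC L Zb = ofBlocks fun i j => L i j • (Zb i * (Zb j)ᴴ) := by
  ext ⟨i, a⟩ ⟨j, b⟩
  simp only [LZmatC, DmatC, ofBlocks, Matrix.mul_apply, Matrix.conjTranspose_apply,
    Matrix.kroneckerMap_apply, Matrix.one_apply, Matrix.of_apply, Matrix.smul_apply,
    Fintype.sum_prod_type, smul_eq_mul]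
  simp [ite_and, apply_ite (starRingEnd ℂ), Finset.mul_sum, Finset.sum_ite_eq,
    Finset.sum_ite_eq', mul_comm, mul_left_comm, Finset.sum_mul, mul_ite, ite_mul]
  exact Finset.sum_congr rfl fun x _ => by ring

/-- the diagonal blocks of `L̂ Y Yᴴ`. -/
noncomputable def NbD (L : Matrix (Fin n) (Fin n) ℂ) (Zb : Fin n → Matrix (Fin r) (Fin r) ℂ)
    (Y : Matrix (Fin n × Fin r) (Fin p) ℂ) (i : Fin n) : Matrix (Fin r) (Fin r) ℂ :=
  ∑ k, (L i k • (Zb i * (Zb k)ᴴ)) * (blk Y k * (blk Y i)ᴴ)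

lemma SmatC_blocks (Zb : Fin n → Matrix (Fin r) (Fin r) ℂ)
    (L : Matrix (Fin n) (Fin n) ℂ) (Y : Matrix (Fin n × Fin r) (Fin p) ℂ) :
    SmatC (LZmatC L Zb) Y = ofBlocks fun i j =>
      L i j • (Zb i * (Zb j)ᴴ) -
        if i = j then (2⁻¹ : ℂ) • (NbD L Zb Y i + (NbD L Zb Y i)ᴴ) else 0 := by
  rw [SmatC, LZmatC_blocks]
  conv_lhs => rw [ofCols_eq_blocks Y]
  rw [ofBlocks_mul_ofCols, ofCols_mul_conjTranspose, SBDC_ofBlocks, ofBlocks_sub]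
  ext ⟨i, a⟩ ⟨j, b⟩
  by_cases h : i = j
  · subst h
    simp [ofBlocks, NbD, Matrix.sum_mul, Matrix.smul_mul, Matrix.mul_assoc,
      Matrix.conjTranspose_sum, Matrix.conjTranspose_smul, Matrix.conjTranspose_mul,
      smul_add, Matrix.sub_apply, Matrix.smul_apply, Matrix.add_apply, Matrix.sum_apply]
  · simp [ofBlocks, h]

lemma trace_S_mul (SF : Fin n → Fin n → Matrix (Fin r) (Fin r) ℂ)
    (Wb : Fin n → Matrix (Fin r) (Fin p) ℂ) :
    (ofBlocks SF * ofCols Wb * (ofCols Wb)ᴴ).trace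
      = ∑ i, ∑ k, (SF i k * (Wb k * (Wb i)ᴴ)).trace := by
  rw [ofBlocks_mul_ofCols, ofCols_mul_conjTranspose, trace_ofBlocks]
  apply Finset.sum_congr rfl
  intro i _
  rw [Matrix.sum_mul, Matrix.trace_sum]
  exact Finset.sum_congr rfl fun k _ => by rw [Matrix.mul_assoc]

end SyncPaper
namespace SyncPaper

variable {n r p : ℕ}

lemma collapseZ {m : Type*} [Fintype m] (Z : Matrix (Fin r) (Fin r) ℂ)
    (hZ : Zᴴ * Z = 1) (M : Matrix (Fin r) m ℂ) : Zᴴ * (Z * M) = M := by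
  rw [← Matrix.mul_assoc, hZ, Matrix.one_mul]

lemma trace_conjT_mul {k : ℕ} (M C : Matrix (Fin k) (Fin k) ℂ) (hC : Cᴴ = C) :
    (Mᴴ * C).trace = star ((M * C).trace) := by
  rw [← Matrix.trace_conjTranspose, Matrix.conjTranspose_mul, hC,
    Matrix.trace_mul_comm]

lemma herm_MMH {k l : ℕ} (M : Matrix (Fin k) (Fin l) ℂ) : (M * Mᴴ)ᴴ = M * Mᴴ := by
  rw [Matrix.conjTranspose_mul, Matrix.conjTranspose_conjTranspose]

lemma cancel_d (Zb : Fin n → Matrix (Fin r) (Fin r) ℂ)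
    (hZb' : ∀ i, (Zb i)ᴴ * Zb i = 1)
    (V : Fin n → Matrix (Fin r) (Fin p) ℂ) (L : Matrix (Fin n) (Fin n) ℂ) (i k : Fin n) :
    ((L i k • (Zb i * (Zb k)ᴴ)) * ((Zb k * V k) * (Zb i * V i)ᴴ)).trace
      = L i k * (V k * (V i)ᴴ).trace := by
  rw [Matrix.smul_mul, Matrix.trace_smul, smul_eq_mul]
  congr 1
  have h : (Zb i * (Zb k)ᴴ) * ((Zb k * V k) * (Zb i * V i)ᴴ)
      = Zb i * ((V k * (V i)ᴴ) * (Zb i)ᴴ) := by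
    simp only [Matrix.conjTranspose_mul, Matrix.mul_assoc, collapseZ _ (hZb' k)]
  rw [h, sandwich_trace _ _ (hZb' i)]

lemma cancel_e (Zb : Fin n → Matrix (Fin r) (Fin r) ℂ)
    (hZb' : ∀ i, (Zb i)ᴴ * Zb i = 1)
    (X V : Fin n → Matrix (Fin r) (Fin p) ℂ) (L : Matrix (Fin n) (Fin n) ℂ) (i j : Fin n) :
    (((L i j • (Zb i * (Zb j)ᴴ)) * ((Zb j * X j) * (Zb i * X i)ᴴ))
        * ((Zb i * V i) * (Zb i * V i)ᴴ)).trace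
      = L i j * ((X j * (X i)ᴴ) * (V i * (V i)ᴴ)).trace := by
  rw [Matrix.smul_mul, Matrix.smul_mul, Matrix.trace_smul, smul_eq_mul]
  congr 1
  have h : ((Zb i * (Zb j)ᴴ) * ((Zb j * X j) * (Zb i * X i)ᴴ))
        * ((Zb i * V i) * (Zb i * V i)ᴴ)
      = Zb i * (((X j * (X i)ᴴ) * (V i * (V i)ᴴ)) * (Zb i)ᴴ) := by
    simp only [Matrix.conjTranspose_mul, Matrix.mul_assoc, collapseZ _ (hZb' j),
      collapseZ _ (hZb' i)]
  rw [h, sandwich_trace _ _ (hZb' i)]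

set_option maxHeartbeats 1000000 in
lemma eval_total (Zb : Fin n → Matrix (Fin r) (Fin r) ℂ)
    (hZb' : ∀ i, (Zb i)ᴴ * Zb i = 1)
    (L : Matrix (Fin n) (Fin n) ℂ) (X V : Fin n → Matrix (Fin r) (Fin p) ℂ) :
    (SmatC (LZmatC L Zb) (ofCols fun i => Zb i * X i)
        * (ofCols fun i => Zb i * V i) * (ofCols fun i => Zb i * V i)ᴴ).trace
      = (∑ i, ∑ k, L i k * (V k * (V i)ᴴ).trace)
        - 2⁻¹ * ((∑ i, ∑ j, L i j * ((X j * (X i)ᴴ) * (V i * (V i)ᴴ)).trace)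
            + star (∑ i, ∑ j, L i j * ((X j * (X i)ᴴ) * (V i * (V i)ᴴ)).trace)) := by
  rw [SmatC_blocks, trace_S_mul]
  have hsplit : ∀ i k : Fin n,
      (((fun i j => L i j • (Zb i * (Zb j)ᴴ) -
          if i = j then (2⁻¹ : ℂ) • (NbD L Zb (ofCols fun i => Zb i * X i) i
            + (NbD L Zb (ofCols fun i => Zb i * X i) i)ᴴ) else 0) i k)
        * ((Zb k * V k) * (Zb i * V i)ᴴ)).trace
      = L i k * (V k * (V i)ᴴ).trace
        - (if i = k then
            ((2⁻¹ : ℂ) • (NbD L Zb (ofCols fun i => Zb i * X i) i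
              + (NbD L Zb (ofCols fun i => Zb i * X i) i)ᴴ)
            * ((Zb i * V i) * (Zb i * V i)ᴴ)).trace
          else 0) := by
    intro i k
    rw [Matrix.sub_mul, Matrix.trace_sub, cancel_d Zb hZb' V L i k]
    congr 1
    by_cases h : i = k
    · subst h; simp
    · simp [h]
  rw [Finset.sum_congr rfl fun i _ => Finset.sum_congr rfl fun k _ => hsplit i k]
  simp only [Finset.sum_sub_distrib]
  congr 1
  have hdiag : ∀ i : Fin n,
      (∑ k, if i = k then
          ((2⁻¹ : ℂ) • (NbD L Zb (ofCols fun i => Zb i * X i) i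
            + (NbD L Zb (ofCols fun i => Zb i * X i) i)ᴴ)
          * ((Zb i * V i) * (Zb i * V i)ᴴ)).trace
        else 0)
      = 2⁻¹ * ((∑ j, L i j * ((X j * (X i)ᴴ) * (V i * (V i)ᴴ)).trace)
          + star (∑ j, L i j * ((X j * (X i)ᴴ) * (V i * (V i)ᴴ)).trace)) := by
    intro i
    rw [Finset.sum_ite_eq Finset.univ i _]
    simp only [Finset.mem_univ, if_true]
    have hNb : (NbD L Zb (ofCols fun i => Zb i * X i) i
          * ((Zb i * V i) * (Zb i * V i)ᴴ)).trace
        = ∑ j, L i j * ((X j * (X i)ᴴ) * (V i * (V i)ᴴ)).trace := by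
      rw [NbD]
      rw [Matrix.sum_mul, Matrix.trace_sum]
      apply Finset.sum_congr rfl
      intro j _
      rw [blk_ofCols, blk_ofCols]
      exact cancel_e Zb hZb' X V L i j
    have hNbH : ((NbD L Zb (ofCols fun i => Zb i * X i) i)ᴴ
          * ((Zb i * V i) * (Zb i * V i)ᴴ)).trace
        = star (∑ j, L i j * ((X j * (X i)ᴴ) * (V i * (V i)ᴴ)).trace) := by
      rw [trace_conjT_mul _ _ (herm_MMH _), hNb]
    rw [Matrix.smul_mul, Matrix.add_mul, Matrix.trace_smul, Matrix.trace_add, hNb, hNbH]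
    simp [smul_eq_mul]
  rw [Finset.sum_congr rfl fun i _ => hdiag i]
  rw [← Finset.mul_sum, Finset.sum_add_distrib, ← star_sum]

end SyncPaper
namespace SyncPaper

variable {n r p : ℕ}

lemma lap_entry (G : SimpleGraph (Fin n)) [DecidableRel G.Adj] (i j : Fin n) :
    G.lapMatrix ℂ i j
      = (if i = j then (G.degree i : ℂ) else 0) - (if G.Adj i j then 1 else 0) := by
  rw [SimpleGraph.lapMatrix]
  simp [SimpleGraph.degMatrix, SimpleGraph.adjMatrix_apply]
  rfl

lemma lap_re (G : SimpleGraph (Fin n)) [DecidableRel G.Adj] (i j : Fin n) :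
    (G.lapMatrix ℂ i j).re
      = (if i = j then (G.degree i : ℝ) else 0) - (if G.Adj i j then 1 else 0) := by
  rw [lap_entry]
  split_ifs <;> simp

lemma lap_im (G : SimpleGraph (Fin n)) [DecidableRel G.Adj] (i j : Fin n) :
    (G.lapMatrix ℂ i j).im = 0 := by
  rw [lap_entry]
  split_ifs <;> simp

set_option maxHeartbeats 1000000 in
lemma eval_re (G : SimpleGraph (Fin n)) [DecidableRel G.Adj]
    (Zb : Fin n → Matrix (Fin r) (Fin r) ℂ)
    (hZb' : ∀ i, (Zb i)ᴴ * Zb i = 1)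
    (X V : Fin n → Matrix (Fin r) (Fin p) ℂ)
    (hX : ∀ i, X i * (X i)ᴴ = 1) :
    ((SmatC (LZmatC (G.lapMatrix ℂ) Zb) (ofCols fun i => Zb i * X i)
        * (ofCols fun i => Zb i * V i) * (ofCols fun i => Zb i * V i)ᴴ).trace).re
      = ∑ i, ∑ j, (if G.Adj i j then (1:ℝ) else 0) *
          ((((X j * (X i)ᴴ) * (V i * (V i)ᴴ)).trace).re
            - (((V j * (V i)ᴴ).trace)).re) := by
  rw [eval_total Zb hZb' (G.lapMatrix ℂ) X V]
  rw [show ∀ z w : ℂ, z - 2⁻¹ * (w + star w) = z - ((w.re : ℝ) : ℂ) by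
    intro z w
    rw [show star w = (starRingEnd ℂ) w from rfl, Complex.add_conj]
    push_cast
    ring]
  rw [Complex.sub_re, Complex.ofReal_re]
  rw [Complex.re_sum, Complex.re_sum]
  rw [Finset.sum_congr rfl fun i _ => Complex.re_sum Finset.univ _,
    Finset.sum_congr rfl fun i _ => Complex.re_sum Finset.univ _]
  rw [← Finset.sum_sub_distrib]
  rw [Finset.sum_congr rfl fun i _ => (Finset.sum_sub_distrib (s := Finset.univ) _ _).symm]
  apply Finset.sum_congr rfl
  intro i _
  apply Finset.sum_congr rfl
  intro j _
  have hmulre : ∀ w : ℂ, (G.lapMatrix ℂ i j * w).re = (G.lapMatrix ℂ i j).re * w.re := by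
    intro w
    rw [Complex.mul_re, lap_im]
    ring
  rw [hmulre, hmulre, lap_re]
  by_cases h : i = j
  · subst h
    have : ((X i * (X i)ᴴ) * (V i * (V i)ᴴ)).trace = (V i * (V i)ᴴ).trace := by
      rw [hX i, Matrix.one_mul]
    rw [this]
    simp [SimpleGraph.irrefl]
  · simp only [if_neg h]
    split_ifs <;> ring

end SyncPaper
namespace SyncPaper

lemma sum_swap4 {A B C D : Type*} [Fintype A] [Fintype B] [Fintype C] [Fintype D]
    (f : A → B → C → D → ℝ) :
    ∑ a, ∑ b, ∑ c, ∑ d, f a b c d = ∑ c, ∑ d, ∑ a, ∑ b, f a b c d := by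
  have h1 : ∑ x : A × B, ∑ y : C × D, f x.1 x.2 y.1 y.2
      = ∑ a, ∑ b, ∑ c, ∑ d, f a b c d := by
    rw [Fintype.sum_prod_type]
    exact Finset.sum_congr rfl fun a _ => Finset.sum_congr rfl fun b _ => by
      rw [Fintype.sum_prod_type]
  have h2 : ∑ y : C × D, ∑ x : A × B, f x.1 x.2 y.1 y.2
      = ∑ c, ∑ d, ∑ a, ∑ b, f a b c d := by
    rw [Fintype.sum_prod_type]
    exact Finset.sum_congr rfl fun c _ => Finset.sum_congr rfl fun d _ => by
      rw [Fintype.sum_prod_type]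
  calc ∑ a, ∑ b, ∑ c, ∑ d, f a b c d = ∑ x : A × B, ∑ y : C × D, f x.1 x.2 y.1 y.2 := h1.symm
    _ = ∑ y : C × D, ∑ x : A × B, f x.1 x.2 y.1 y.2 := Finset.sum_comm
    _ = ∑ c, ∑ d, ∑ a, ∑ b, f a b c d := h2

set_option maxHeartbeats 2000000 in
theorem complex_noiseless_landscape'
    (n r p : ℕ) (hn : 1 ≤ n) (hr : 1 ≤ r) (hrp : r ≤ p) (hp : 3 * r ≤ 2 * p)
    (G : SimpleGraph (Fin n)) [DecidableRel G.Adj] (hG : G.Connected)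
    (Zb : Fin n → Matrix (Fin r) (Fin r) ℂ) (hZb : ∀ i, Zb i * (Zb i)ᴴ = 1)
    (Lhat : Matrix (Fin n × Fin r) (Fin n × Fin r) ℂ)
    (hLhat : Lhat = LZmatC (G.lapMatrix ℂ) Zb)
    (Y : Matrix (Fin n × Fin r) (Fin p) ℂ)
    (hY : IsSecondOrderCriticalC Lhat Y) :
    Y * Yᴴ = ZstackC Zb * (ZstackC Zb)ᴴ := by
  obtain ⟨hfeas, _hfirst, hsecond⟩ := hY
  have hZb' : ∀ i, (Zb i)ᴴ * Zb i = 1 := fun i => mul_eq_one_comm.mp (hZb i)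
  obtain ⟨X, hYX⟩ : ∃ X : Fin n → Matrix (Fin r) (Fin p) ℂ,
      ∀ i, Zb i * X i = blk Y i :=
    ⟨fun i => (Zb i)ᴴ * blk Y i, fun i => by
      rw [← Matrix.mul_assoc, hZb i, Matrix.one_mul]⟩
  have hXi : ∀ i, X i = (Zb i)ᴴ * blk Y i := fun i => by
    rw [← hYX i, ← Matrix.mul_assoc, hZb' i, Matrix.one_mul]
  have hX : ∀ i, X i * (X i)ᴴ = 1 := by
    intro i
    have h1 : X i * (X i)ᴴ = (Zb i)ᴴ * ((blk Y i * (blk Y i)ᴴ) * Zb i) := by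
      rw [hXi i]
      simp only [Matrix.conjTranspose_mul, Matrix.conjTranspose_conjTranspose,
        Matrix.mul_assoc]
    rw [h1, hfeas i, Matrix.one_mul, hZb' i]
  have hYcols : Y = ofCols fun i => Zb i * X i := by
    conv_lhs => rw [ofCols_eq_blocks Y]
    exact congrArg ofCols (funext fun i => (hYX i).symm)
  have htang : ∀ (Q : Matrix (Fin r) (Fin p) ℂ) (i : Fin n),
      blk (ofCols fun i => Zb i * phiD (X i) Q) i * (blk Y i)ᴴ
      + blk Y i * (blk (ofCols fun i => Zb i * phiD (X i) Q) i)ᴴ = 0 := by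
    intro Q i
    rw [blk_ofCols, ← hYX i]
    have ht := phiD_tangent (X i) Q (hX i)
    have h2 : (Zb i * phiD (X i) Q) * (Zb i * X i)ᴴ
        + (Zb i * X i) * (Zb i * phiD (X i) Q)ᴴ
        = Zb i * ((phiD (X i) Q * (X i)ᴴ + X i * (phiD (X i) Q)ᴴ) * (Zb i)ᴴ) := by
      simp only [Matrix.conjTranspose_mul, Matrix.mul_add, Matrix.add_mul,
        Matrix.mul_assoc]
    rw [h2, ht, Matrix.zero_mul, Matrix.mul_zero]
  have hQ : ∀ Q : Matrix (Fin r) (Fin p) ℂ,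
      0 ≤ ∑ i, ∑ j, (if G.Adj i j then (1:ℝ) else 0) * (tauC (X i) (X j) Q).re := by
    intro Q
    have h2 := hsecond (ofCols fun i => Zb i * phiD (X i) Q) (htang Q)
    rw [hLhat, hYcols] at h2
    have h3 := eval_re G Zb hZb' X (fun i => phiD (X i) Q) hX
    rw [h3] at h2
    simpa only [tauC, Complex.sub_re] using h2
  have hfam : 0 ≤ ∑ i, ∑ j, (if G.Adj i j then (1:ℝ) else 0) *
      (∑ a : Fin r, ∑ α : Fin p,
        (tauC (X i) (X j) (unitM a α) + tauC (X i) (X j) (Complex.I • unitM a α))).re := by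
    have h0 : 0 ≤ ∑ a : Fin r, ∑ α : Fin p, ∑ i, ∑ j,
        ((if G.Adj i j then (1:ℝ) else 0) * (tauC (X i) (X j) (unitM a α)).re
          + (if G.Adj i j then (1:ℝ) else 0) * (tauC (X i) (X j) (Complex.I • unitM a α)).re) := by
      apply Finset.sum_nonneg; intro a _
      apply Finset.sum_nonneg; intro α _
      simp only [Finset.sum_add_distrib]
      exact add_nonneg (hQ (unitM a α)) (hQ (Complex.I • unitM a α))
    rw [sum_swap4] at h0
    have hconv : ∀ i j, (∑ a : Fin r, ∑ α : Fin p,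
        ((if G.Adj i j then (1:ℝ) else 0) * (tauC (X i) (X j) (unitM a α)).re
          + (if G.Adj i j then (1:ℝ) else 0) * (tauC (X i) (X j) (Complex.I • unitM a α)).re))
        = (if G.Adj i j then (1:ℝ) else 0) *
          (∑ a : Fin r, ∑ α : Fin p,
            (tauC (X i) (X j) (unitM a α) + tauC (X i) (X j) (Complex.I • unitM a α))).re := by
      intro i j
      rw [Complex.re_sum, Finset.mul_sum]
      apply Finset.sum_congr rfl; intro a _
      rw [Complex.re_sum, Finset.mul_sum]
      apply Finset.sum_congr rfl; intro α _
      rw [Complex.add_re, mul_add]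
    rw [Finset.sum_congr rfl fun i _ => Finset.sum_congr rfl fun j _ => hconv i j] at h0
    exact h0
  --每 term is nonpositive
  have hterm : ∀ i j, (if G.Adj i j then (1:ℝ) else 0) *
      (∑ a : Fin r, ∑ α : Fin p,
        (tauC (X i) (X j) (unitM a α) + tauC (X i) (X j) (Complex.I • unitM a α))).re ≤ 0 := by
    intro i j
    by_cases h : G.Adj i j
    · rw [if_pos h, one_mul]
      exact (pair_main hr hp (X i) (X j) (hX i) (hX j)).1
    · rw [if_neg h, zero_mul]
  -- so each term vanishes
  have hzero : ∀ i j, (if G.Adj i j then (1:ℝ) else 0) *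
      (∑ a : Fin r, ∑ α : Fin p,
        (tauC (X i) (X j) (unitM a α) + tauC (X i) (X j) (Complex.I • unitM a α))).re = 0 := by
    have hsle : ∑ i, ∑ j, (if G.Adj i j then (1:ℝ) else 0) *
        (∑ a : Fin r, ∑ α : Fin p,
          (tauC (X i) (X j) (unitM a α) + tauC (X i) (X j) (Complex.I • unitM a α))).re ≤ 0 :=
      Finset.sum_nonpos fun i _ => Finset.sum_nonpos fun j _ => hterm i j
    have hs0 := le_antisymm hsle hfam
    have houter := (Finset.sum_eq_zero_iff_of_nonpos
      (fun i _ => Finset.sum_nonpos fun j _ => hterm i j)).mp hs0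
    intro i j
    exact (Finset.sum_eq_zero_iff_of_nonpos (fun j _ => hterm i j)).mp
      (houter i (Finset.mem_univ i)) j (Finset.mem_univ j)
  have hedge : ∀ i j, G.Adj i j → X i = X j := by
    intro i j h
    have h1 := hzero i j
    rw [if_pos h, one_mul] at h1
    exact (pair_main hr hp (X i) (X j) (hX i) (hX j)).2 h1
  have hall : ∀ i j, X i = X j := by
    intro i j
    obtain ⟨w⟩ := hG.preconnected i j
    induction w with
    | nil => rfl
    | cons h q ih => exact (hedge _ _ h).trans ih
  have hblocks : Y * Yᴴ = ofBlocks fun i j => Zb i * (Zb j)ᴴ := by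
    rw [hYcols, ofCols_mul_conjTranspose]
    apply congrArg ofBlocks
    funext i j
    have hxx : X i * (X j)ᴴ = 1 := by rw [hall i j]; exact hX j
    have h1 : (Zb i * X i) * (Zb j * X j)ᴴ = Zb i * ((X i * (X j)ᴴ) * (Zb j)ᴴ) := by
      simp only [Matrix.conjTranspose_mul, Matrix.mul_assoc]
    rw [h1, hxx, Matrix.one_mul]
  have hZZ : ZstackC Zb * (ZstackC Zb)ᴴ = ofBlocks fun i j => Zb i * (Zb j)ᴴ := by
    ext ⟨i, a⟩ ⟨j, b⟩
    simp [ZstackC, ofBlocks, Matrix.mul_apply, Matrix.conjTranspose_apply]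
  rw [hblocks, hZZ]

end SyncPaper

namespace SyncPaper

/-- **Theorem 1.5 (complex/unitary case, noiseless).**  If `G` is connected, the measurements are
exact (`L̂ = L_Z`), and `2p ≥ 3r`, then every second-order critical point `Y` of the complex
rank-`p` problem satisfies `Y Y* = Z Z*`. -/
theorem complex_noiseless_landscape
    (n r p : ℕ) (hn : 1 ≤ n) (hr : 1 ≤ r) (hrp : r ≤ p) (hp : 3 * r ≤ 2 * p)
    (G : SimpleGraph (Fin n)) [DecidableRel G.Adj] (hG : G.Connected)
    (Zb : Fin n → Matrix (Fin r) (Fin r) ℂ) (hZb : ∀ i, Zb i * (Zb i)ᴴ = 1)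
    (Lhat : Matrix (Fin n × Fin r) (Fin n × Fin r) ℂ)
    (hLhat : Lhat = LZmatC (G.lapMatrix ℂ) Zb)
    (Y : Matrix (Fin n × Fin r) (Fin p) ℂ)
    (hY : IsSecondOrderCriticalC Lhat Y) :
    Y * Yᴴ = ZstackC Zb * (ZstackC Zb)ᴴ := by
  exact complex_noiseless_landscape' n r p hn hr hrp hp G hG Zb hZb Lhat hLhat Y hY

end SyncPaper
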